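/- Let (P,≤) be a poset with an extendible triple A, B, C, and let (P,⪯) = R_{A,C}(P,≤). Then C is a downset of (P,⪯), A is an upset of (P,⪯), c ≺ a for all c ∈ C and a ∈ A, and R_{C,A}(P,⪯) = (P,≤). Consequently, rotation-equivalence is a symmetric relation. -/

import Mathlib

universe u

variable {P : Type u}

/-- `A` is a downset (downward closed set) w.r.t. the relation `le`. -/
def IsDownset (le : P → P → Prop) (A : Set P) : Prop :=
  ∀ ⦃x⦄, x ∈ A → ∀ ⦃y⦄, le y x → y ∈ A

/-- `C` is an upset (upward closed set) w.r.t. the relation `le`. -/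
def IsUpset (le : P → P → Prop) (C : Set P) : Prop :=
  ∀ ⦃x⦄, x ∈ C → ∀ ⦃y⦄, le x y → y ∈ C

/-- `x` and `y` are incomparable w.r.t. `le`. -/
def Incomp (le : P → P → Prop) (x y : P) : Prop := ¬ le x y ∧ ¬ le y x

/-- Strictly less: `le x y` and `x ≠ y`. -/
def SLT (le : P → P → Prop) (x y : P) : Prop := le x y ∧ x ≠ y

/-- The conditions under which the rotation `R_{A,C}` is defined:
`A`, `C` disjoint, `A` a downset, `C` an upset, and every element of `A`
strictly below every element of `C`. -/
def RotOK (le : P → P → Prop) (A C : Set P) : Prop :=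
  Disjoint A C ∧ IsDownset le A ∧ IsUpset le C ∧
    ∀ a ∈ A, ∀ c ∈ C, le a c ∧ a ≠ c

/-- The rotation `R_{A,C}` of the relation `le`; the middle block `B` is the
complement of `A ∪ C`. -/
def Rot (le : P → P → Prop) (A C : Set P) : P → P → Prop := fun x y =>
  (((x ∈ A ∧ y ∈ A) ∨ (x ∉ A ∧ x ∉ C ∧ y ∉ A ∧ y ∉ C) ∨ (x ∈ C ∧ y ∈ C)) ∧ le x y) ∨
  (x ∉ A ∧ x ∉ C ∧ y ∈ A ∧ Incomp le x y) ∨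
  (x ∈ C ∧ y ∈ A) ∨
  (x ∈ C ∧ y ∉ A ∧ y ∉ C ∧ Incomp le x y)

/-- One rotation step between two relations on the same domain. -/
def RotStep (le le' : P → P → Prop) : Prop :=
  ∃ A C, RotOK le A C ∧ le' = Rot le A C

/-- Rotation-equivalence: the reflexive-transitive closure of rotation steps. -/
def RotEquiv (le le' : P → P → Prop) : Prop :=
  Relation.ReflTransGen RotStep le le'

/-- Restriction of a relation to a subset (as a relation on the subtype). -/
def restrictRel (le : P → P → Prop) (S : Set P) : S → S → Prop :=
  fun x y => le x.1 y.1

/-- The set of maximal elements of a relation. -/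
def maxSet (le : P → P → Prop) : Set P := {x | ∀ y, le x y → y = x}

/-- The rotation class `O₂` of a three element poset `{a,b,c}`:
chains `a<b<c`, `b<c<a`, `c<a<b`, and the posets with single comparability
`a<b`, `b<c`, `c<a`. -/
def O2rel (le : P → P → Prop) (a b c : P) : Prop :=
  (SLT le a b ∧ SLT le b c) ∨ (SLT le b c ∧ SLT le c a) ∨ (SLT le c a ∧ SLT le a b) ∨
  (SLT le a b ∧ Incomp le a c ∧ Incomp le b c) ∨
  (SLT le b c ∧ Incomp le b a ∧ Incomp le c a) ∨
  (SLT le c a ∧ Incomp le c b ∧ Incomp le a b)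

/-- The rotation class `O₃`: the dual of `O₂`. -/
def O3rel (le : P → P → Prop) (a b c : P) : Prop := O2rel le c b a

/-- The rotation class `O₁`: the antichain together with the `V` and `Λ` shaped
three element posets. -/
def O1rel (le : P → P → Prop) (a b c : P) : Prop :=
  (Incomp le a b ∧ Incomp le b c ∧ Incomp le a c) ∨
  (SLT le a b ∧ SLT le a c ∧ Incomp le b c) ∨
  (SLT le b a ∧ SLT le b c ∧ Incomp le a c) ∨
  (SLT le c a ∧ SLT le c b ∧ Incomp le a b) ∨
  (SLT le b a ∧ SLT le c a ∧ Incomp le b c) ∨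
  (SLT le a b ∧ SLT le c b ∧ Incomp le a c) ∨
  (SLT le a c ∧ SLT le b c ∧ Incomp le a b)

/-- The extension property (EXT) characterizing the random poset: every
one-point extension of a finite subposet is realized by some element. -/
def ExtProp (le : P → P → Prop) : Prop :=
  ∀ Q : Set P, Q.Finite → ∀ D U : Set P, D ⊆ Q → U ⊆ Q → Disjoint D U →
    (∀ x ∈ Q, ∀ d ∈ D, le x d → x ∈ D) →
    (∀ x ∈ Q, ∀ u ∈ U, le u x → x ∈ U) →
    (∀ d ∈ D, ∀ u ∈ U, le d u ∧ d ≠ u) →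
    ∃ s, s ∉ Q ∧ (∀ d ∈ D, le d s ∧ d ≠ s) ∧ (∀ u ∈ U, le s u ∧ s ≠ u) ∧
      ∀ x ∈ Q, x ∉ D → x ∉ U → Incomp le s x


lemma rotOK_rot (le : P → P → Prop) (A C : Set P) (hd : Disjoint A C) :
    RotOK (Rot le A C) C A := by
  have hdis : ∀ ⦃x⦄, x ∈ A → x ∉ C := fun x hx hc => Set.disjoint_left.mp hd hx hc
  refine ⟨hd.symm, ?_, ?_, ?_⟩
  · intro x hx y hxy
    have hxA : x ∉ A := fun hxA => hdis hxA hx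
    rcases hxy with ⟨hb, _⟩ | hb | hb | hb <;> tauto
  · intro x hx y hxy
    have hxC : x ∉ C := hdis hx
    rcases hxy with ⟨hb, _⟩ | hb | hb | hb <;> tauto
  · intro c hc a ha
    exact ⟨Or.inr (Or.inr (Or.inl ⟨hc, ha⟩)), fun e => hdis ha (e ▸ hc)⟩

lemma rot_isPartialOrder (le : P → P → Prop) [IsPartialOrder P le]
    (A C : Set P) (h : RotOK le A C) : IsPartialOrder P (Rot le A C) := by
  obtain ⟨hd, hA, hC, hAC⟩ := h
  have hdis : ∀ ⦃x⦄, x ∈ A → x ∉ C := fun x hx hc => Set.disjoint_left.mp hd hx hc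
  have lrefl : ∀ x : P, le x x := fun x => refl_of le x
  have ltrans : ∀ {x y z : P}, le x y → le y z → le x z := fun h1 h2 => Trans.trans h1 h2
  have lanti : ∀ {x y : P}, le x y → le y x → x = y := fun h1 h2 => antisymm_of le h1 h2
  refine { refl := ?_, trans := ?_, antisymm := ?_ }
  · intro x
    by_cases hxA : x ∈ A
    · exact Or.inl ⟨Or.inl ⟨hxA, hxA⟩, lrefl x⟩
    · by_cases hxC : x ∈ C
      · exact Or.inl ⟨Or.inr (Or.inr ⟨hxC, hxC⟩), lrefl x⟩
      · exact Or.inl ⟨Or.inr (Or.inl ⟨hxA, hxC, hxA, hxC⟩), lrefl x⟩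
  · intro x y z hxy hyz
    rcases hxy with ⟨(⟨hxA, hyA⟩ | ⟨hxA, hxC, hyA, hyC⟩ | ⟨hxC, hyC⟩), hl⟩ |
      ⟨hxA, hxC, hyA, hi⟩ | ⟨hxC, hyA⟩ | ⟨hxC, hyA, hyC, hi⟩
    · -- x,y ∈ A
      rcases hyz with ⟨(⟨_, hzA⟩ | hb | hb), hl2⟩ | hb | hb | hb
      · exact Or.inl ⟨Or.inl ⟨hxA, hzA⟩, ltrans hl hl2⟩
      all_goals first
        | (exact absurd hyA (by tauto)) | (exact absurd (hdis hyA) (by tauto))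
    · -- x,y ∈ B
      rcases hyz with ⟨(⟨hyA', _⟩ | ⟨_, _, hzA, hzC⟩ | ⟨hyC', _⟩), hl2⟩ |
        ⟨_, _, hzA, hi2⟩ | ⟨hyC', _⟩ | ⟨hyC', _⟩
      · exact absurd hyA' hyA
      · exact Or.inl ⟨Or.inr (Or.inl ⟨hxA, hxC, hzA, hzC⟩), ltrans hl hl2⟩
      · exact absurd hyC' hyC
      · refine Or.inr (Or.inl ⟨hxA, hxC, hzA, fun hxz => hxA (hA hzA hxz),
          fun hzx => hi2.2 (ltrans hzx hl)⟩)
      · exact absurd hyC' hyC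
      · exact absurd hyC' hyC
    · -- x,y ∈ C
      rcases hyz with ⟨(⟨hyA', _⟩ | ⟨_, hyC', _⟩ | ⟨_, hzC⟩), hl2⟩ |
        ⟨_, hyC', _⟩ | ⟨_, hzA⟩ | ⟨_, hzA, hzC, hi2⟩
      · exact absurd hyC (hdis hyA')
      · exact absurd hyC hyC'
      · exact Or.inl ⟨Or.inr (Or.inr ⟨hxC, hzC⟩), ltrans hl hl2⟩
      · exact absurd hyC hyC'
      · exact Or.inr (Or.inr (Or.inl ⟨hxC, hzA⟩))
      · exact Or.inr (Or.inr (Or.inr ⟨hxC, hzA, hzC, fun hxz => hzC (hC hxC hxz),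
          fun hzx => hi2.2 (ltrans hzx hl)⟩))
    · -- x ∈ B, y ∈ A
      rcases hyz with ⟨(⟨_, hzA⟩ | ⟨hyA', _⟩ | ⟨hyC', _⟩), hl2⟩ |
        ⟨hyA', _⟩ | ⟨hyC', _⟩ | ⟨hyC', _⟩
      · exact Or.inr (Or.inl ⟨hxA, hxC, hzA, fun hxz => hxA (hA hzA hxz),
          fun hzx => hi.2 (ltrans hl2 hzx)⟩)
      all_goals first
        | (exact absurd hyA hyA') | (exact absurd (hdis hyA) (by exact fun h => h hyC'))
    · -- x ∈ C, y ∈ A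
      rcases hyz with ⟨(⟨_, hzA⟩ | ⟨hyA', _⟩ | ⟨hyC', _⟩), hl2⟩ |
        ⟨hyA', _⟩ | ⟨hyC', _⟩ | ⟨hyC', _⟩
      · exact Or.inr (Or.inr (Or.inl ⟨hxC, hzA⟩))
      all_goals first
        | (exact absurd hyA hyA') | (exact absurd (hdis hyA) (by exact fun h => h hyC'))
    · -- x ∈ C, y ∈ B
      rcases hyz with ⟨(⟨hyA', _⟩ | ⟨_, _, hzA, hzC⟩ | ⟨hyC', _⟩), hl2⟩ |
        ⟨_, _, hzA, hi2⟩ | ⟨hyC', _⟩ | ⟨hyC', _⟩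
      · exact absurd hyA' hyA
      · exact Or.inr (Or.inr (Or.inr ⟨hxC, hzA, hzC, fun hxz => hzC (hC hxC hxz),
          fun hzx => hi.2 (ltrans hl2 hzx)⟩))
      · exact absurd hyC' hyC
      · exact Or.inr (Or.inr (Or.inl ⟨hxC, hzA⟩))
      · exact absurd hyC' hyC
      · exact absurd hyC' hyC
  · intro x y hxy hyx
    rcases hxy with ⟨hb, hl⟩ | ⟨hxA, hxC, hyA, hi⟩ | ⟨hxC, hyA⟩ | ⟨hxC, hyA, hyC, hi⟩ <;>
    rcases hyx with ⟨hb2, hl2⟩ | ⟨hyA', hyC', hxA', hi2⟩ | ⟨hyC', hxA'⟩ | ⟨hyC', hxA', hxC', hi2⟩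
    · exact lanti hl hl2
    all_goals first
      | tauto
      | (exact absurd (hdis (by tauto)) (by tauto))

set_option maxHeartbeats 2000000 in
lemma rot_rot (le : P → P → Prop) [IsPartialOrder P le]
    (A C : Set P) (h : RotOK le A C) : Rot (Rot le A C) C A = le := by
  obtain ⟨hd, hA, hC, hAC⟩ := h
  have hdis : ∀ ⦃x⦄, x ∈ A → x ∉ C := fun x hx hc => Set.disjoint_left.mp hd hx hc
  funext x y
  have f1 : y ∈ A → le x y → x ∈ A := fun hy hl => hA hy hl
  have f2 : x ∈ A → le y x → y ∈ A := fun hx hl => hA hx hl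
  have f3 : x ∈ C → le x y → y ∈ C := fun hx hl => hC hx hl
  have f4 : y ∈ C → le y x → x ∈ C := fun hy hl => hC hy hl
  have f5 : x ∈ A → y ∈ C → le x y := fun hx hy => (hAC x hx y hy).1
  have f6 : y ∈ A → x ∈ C → le y x := fun hy hx => (hAC y hy x hx).1
  have f7 : x ∈ C → y ∈ A → ¬ le x y := fun hx hy hl =>
    (hAC y hy x hx).2 (antisymm_of le (hAC y hy x hx).1 hl)
  have f8 : y ∈ C → x ∈ A → ¬ le y x := fun hy hx hl =>
    (hAC x hx y hy).2 (antisymm_of le (hAC x hx y hy).1 hl)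
  have dx : x ∈ A → x ∉ C := fun hx => hdis hx
  have dy : y ∈ A → y ∉ C := fun hy => hdis hy
  show Rot (Rot le A C) C A x y = le x y
  by_cases hxA : x ∈ A <;> by_cases hxC : x ∈ C <;>
    by_cases hyA : y ∈ A <;> by_cases hyC : y ∈ C <;>
    simp only [Rot, Incomp, eq_iff_iff, hxA, hxC, hyA, hyC, not_true, not_false_iff,
      true_and, and_true, false_and, and_false, true_or, or_true, false_or, or_false,
      not_not, not_false_eq_true, not_true_eq_false] <;>
    first
      | itauto!
      | exact ⟨fun h0 => Classical.byContradiction fun hn => h0 ⟨fun hl => hyA (f2 hxA hl), hn⟩,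
          fun hl h0 => h0.2 hl⟩
      | exact ⟨fun h0 => Classical.byContradiction fun hn => h0 ⟨fun hl => hxC (f4 hyC hl), hn⟩,
          fun hl h0 => h0.2 hl⟩

theorem stmt6 (le : P → P → Prop) [IsPartialOrder P le]
    (A C B : Set P) (hB : B = (A ∪ C)ᶜ) (h : RotOK le A C) :
    IsDownset (Rot le A C) C ∧ IsUpset (Rot le A C) A ∧
    (∀ c ∈ C, ∀ a ∈ A, Rot le A C c a ∧ c ≠ a) ∧
    Rot (Rot le A C) C A = le ∧
    ∀ (r s : P → P → Prop), IsPartialOrder P r → RotEquiv r s → RotEquiv s r := by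
  obtain ⟨hd', hDn, hUp, hCA⟩ := rotOK_rot le A C h.1
  refine ⟨hDn, hUp, hCA, rot_rot le A C h, ?_⟩
  intro r s hr hrs
  suffices H : IsPartialOrder P s ∧ RotEquiv s r from H.2
  induction hrs with
  | refl => exact ⟨hr, Relation.ReflTransGen.refl⟩
  | tail h1 h2 ih =>
      obtain ⟨hpo_b, hba⟩ := ih
      obtain ⟨A', C', hok, rfl⟩ := h2
      haveI := hpo_b
      refine ⟨rot_isPartialOrder _ A' C' hok, Relation.ReflTransGen.head ?_ hba⟩
      exact ⟨C', A', rotOK_rot _ A' C' hok.1, (rot_rot _ A' C' hok).symm⟩
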